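/- For the superposition trawl, the (possibly infinite) integral of the overlap area satisfies ∫_0^∞ leb(A_t ∩ A) dt = (1 − b)·∫_0^∞ λ^{−2} π(dλ), as an equality in [0, ∞]. Consequently, the integrated autocorrelation ∫_0^∞ leb(A_t ∩ A)/leb(A) dt equals (∫_0^∞ λ^{−2} π(dλ)) / (∫_0^∞ λ^{−1} π(dλ)), and it is finite if and only if ∫_0^∞ λ^{−2} π(dλ) < ∞. -/

import Mathlib

open MeasureTheory Set Filter

lemma st13_exp_integrable {l : ℝ} (hl : 0 < l) :
    IntegrableOn (fun x : ℝ => Real.exp (-(l * x))) (Set.Ioi (0:ℝ)) := by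
  simpa [neg_mul] using exp_neg_integrableOn_Ioi 0 hl

lemma st13_exp_integral {l : ℝ} (hl : 0 < l) :
    ∫ x in Set.Ioi (0:ℝ), Real.exp (-(l * x)) = 1 / l := by
  have h := integral_comp_mul_left_Ioi (fun y : ℝ => Real.exp (-y)) 0 hl
  simp only [mul_zero] at h
  rw [h, integral_exp_neg_Ioi]
  simp [one_div]

lemma st13_lint_Ioi {l : ℝ} (hl : 0 < l) :
    ∫⁻ t in Set.Ioi (0:ℝ), ENNReal.ofReal (Real.exp (-(l * t))) = ENNReal.ofReal (1 / l) := by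
  rw [← ofReal_integral_eq_lintegral_ofReal (st13_exp_integrable hl)
      (Filter.Eventually.of_forall fun x => (Real.exp_pos _).le), st13_exp_integral hl]

lemma st13_exp_integrableOn_Iic {l : ℝ} (hl : 0 < l) (t : ℝ) :
    IntegrableOn (fun s : ℝ => Real.exp (l * (s - t))) (Set.Iic (0:ℝ)) := by
  have h_map_neg : ((volume : Measure ℝ).restrict (Set.Ici 0)).map Neg.neg
      = (volume : Measure ℝ).restrict (Set.Iic 0) := by
    conv => rhs; rw [← Measure.map_neg_eq_self (volume : Measure ℝ),
      measurableEmbedding_neg.restrict_map]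
    simp
  rw [IntegrableOn, ← h_map_neg, measurableEmbedding_neg.integrable_map_iff]
  have : ((fun s : ℝ => Real.exp (l * (s - t))) ∘ Neg.neg)
      = fun x : ℝ => Real.exp (-(l * t)) * Real.exp (-(l * x)) := by
    funext x
    simp only [Function.comp_apply, ← Real.exp_add]
    ring_nf
  rw [this]
  exact (((integrableOn_Ici_iff_integrableOn_Ioi (f := fun x : ℝ => Real.exp (-(l * x))) enorm_ne_top).mpr (st13_exp_integrable hl)).const_mul _)

lemma st13_integral_Iic {l : ℝ} (hl : 0 < l) (t : ℝ) :
    ∫ s in Set.Iic (0:ℝ), Real.exp (l * (s - t)) = Real.exp (-(l * t)) / l := by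
  have h := integral_comp_neg_Iic (0:ℝ) (fun x : ℝ => Real.exp (l * (-x - t)))
  simp only [neg_neg, neg_zero] at h
  calc ∫ s in Set.Iic (0:ℝ), Real.exp (l * (s - t))
      = ∫ x in Set.Ioi (0:ℝ), Real.exp (l * (-x - t)) := h
    _ = ∫ x in Set.Ioi (0:ℝ), Real.exp (-(l * t)) * Real.exp (-(l * x)) := by
        congr 1; funext x; rw [← Real.exp_add]; ring_nf
    _ = Real.exp (-(l * t)) * (1 / l) := by
        rw [integral_const_mul, st13_exp_integral hl]
    _ = Real.exp (-(l * t)) / l := by ring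

lemma st13_lint_Iic {l : ℝ} (hl : 0 < l) (t : ℝ) :
    ∫⁻ s in Set.Iic (0:ℝ), ENNReal.ofReal (Real.exp (l * (s - t)))
      = ENNReal.ofReal (Real.exp (-(l * t)) / l) := by
  rw [← ofReal_integral_eq_lintegral_ofReal (st13_exp_integrableOn_Iic hl t)
      (Filter.Eventually.of_forall fun x => (Real.exp_pos _).le), st13_integral_Iic hl t]


/-- For the superposition trawl, as an identity in `[0,∞]`,
`∫_0^∞ leb(A_t ∩ A) dt = (1 − b)·∫ λ⁻² π(dλ)`; consequently the integrated autocorrelation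
`∫_0^∞ leb(A_t ∩ A)/leb(A) dt` equals `(∫ λ⁻² π(dλ))/(∫ λ⁻¹ π(dλ))`, and it is finite if
and only if `∫ λ⁻² π(dλ) < ∞`. -/
theorem superposition_trawl_integrated_autocorrelation
    (b : ℝ) (hb : b ∈ Set.Ico (0:ℝ) 1)
    (π : Measure ℝ) [IsProbabilityMeasure π]
    (hπ0 : π (Set.Iic 0) = 0)
    (hπint : MeasureTheory.Integrable (fun l => l⁻¹) π)
    (d : ℝ → ℝ)
    (hd : ∀ s : ℝ, d s = b + (1 - b) * ∫ l, Real.exp (l * s) ∂π)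
    (A : ℝ → Set (ℝ × ℝ))
    (hA : ∀ t, A t = {p : ℝ × ℝ | p.2 ≤ t ∧ b ≤ p.1 ∧ p.1 < d (p.2 - t)}) :
    (∫⁻ t in Set.Ioi (0:ℝ), volume (A t ∩ A 0)
        = ENNReal.ofReal (1 - b) * ∫⁻ l, ENNReal.ofReal (1 / l ^ 2) ∂π) ∧
    (∫⁻ t in Set.Ioi (0:ℝ), volume (A t ∩ A 0) / volume (A 0)
        = (∫⁻ l, ENNReal.ofReal (1 / l ^ 2) ∂π) / (∫⁻ l, ENNReal.ofReal (1 / l) ∂π)) ∧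
    ((∫⁻ t in Set.Ioi (0:ℝ), volume (A t ∩ A 0) / volume (A 0)) < ⊤ ↔
      (∫⁻ l, ENNReal.ofReal (1 / l ^ 2) ∂π) < ⊤) := by
  obtain ⟨hb0, hb1⟩ := hb
  have h1b : (0:ℝ) < 1 - b := by linarith
  have hpos : ∀ᵐ l ∂π, 0 < l := by
    rw [ae_iff]
    convert hπ0 using 2
    ext l; simp [not_lt]
  have hint_exp : ∀ s : ℝ, s ≤ 0 → Integrable (fun l => Real.exp (l * s)) π := by
    intro s hs
    refine Integrable.mono' (integrable_const 1) ?_ ?_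
    · exact (Real.continuous_exp.comp (continuous_id.mul continuous_const)).aestronglyMeasurable
    · filter_upwards [hpos] with l hl
      rw [Real.norm_eq_abs, abs_of_pos (Real.exp_pos _)]
      have : l * s ≤ 0 := mul_nonpos_of_nonneg_of_nonpos hl.le hs
      simpa using Real.exp_le_exp.mpr this
  have hdm : Measurable d := by
    have hsm : StronglyMeasurable (fun p : ℝ × ℝ => Real.exp (p.2 * p.1)) :=
      (Real.continuous_exp.comp (continuous_snd.mul continuous_fst)).stronglyMeasurable
    have h2 := hsm.integral_prod_right' (ν := π)
    have hde : d = fun s => b + (1 - b) * ∫ l, Real.exp (l * s) ∂π := funext hd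
    rw [hde]
    exact measurable_const.add (measurable_const.mul h2.measurable)
  have hmono : ∀ s : ℝ, s ≤ 0 → ∀ t : ℝ, 0 ≤ t → d (s - t) ≤ d s := by
    intro s hs t ht
    rw [hd, hd]
    have hint : ∫ l, Real.exp (l * (s - t)) ∂π ≤ ∫ l, Real.exp (l * s) ∂π := by
      refine integral_mono_ae (hint_exp _ (by linarith)) (hint_exp s hs) ?_
      filter_upwards [hpos] with l hl
      exact Real.exp_le_exp.mpr (mul_le_mul_of_nonneg_left (by linarith) hl.le)
    linarith [mul_le_mul_of_nonneg_left hint h1b.le]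
  have hofReal : ∀ s : ℝ, s ≤ 0 → ENNReal.ofReal (d s - b)
      = ENNReal.ofReal (1 - b) * ∫⁻ l, ENNReal.ofReal (Real.exp (l * s)) ∂π := by
    intro s hs
    rw [hd s, add_sub_cancel_left, ENNReal.ofReal_mul h1b.le,
      ofReal_integral_eq_lintegral_ofReal (hint_exp s hs)
        (Filter.Eventually.of_forall fun l => (Real.exp_pos _).le)]
  have hvol : ∀ t : ℝ, 0 ≤ t → volume (A t ∩ A 0)
      = ENNReal.ofReal (1 - b) * ∫⁻ l, ENNReal.ofReal (Real.exp (-(l * t)) / l) ∂π := by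
    intro t ht
    have hset : A t ∩ A 0 = {p : ℝ × ℝ | p.2 ≤ 0 ∧ b ≤ p.1 ∧ p.1 < d (p.2 - t)} := by
      rw [hA, hA]; ext p
      simp only [Set.mem_inter_iff, Set.mem_setOf_eq, sub_zero]
      constructor
      · rintro ⟨⟨-, hb1', hlt⟩, h0, -, -⟩
        exact ⟨h0, hb1', hlt⟩
      · rintro ⟨h0, hb1', hlt⟩
        exact ⟨⟨le_trans h0 ht, hb1', hlt⟩, h0, hb1',
          lt_of_lt_of_le hlt (hmono p.2 h0 t ht)⟩
    have hms : MeasurableSet {p : ℝ × ℝ | p.2 ≤ 0 ∧ b ≤ p.1 ∧ p.1 < d (p.2 - t)} := by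
      have heq : {p : ℝ × ℝ | p.2 ≤ 0 ∧ b ≤ p.1 ∧ p.1 < d (p.2 - t)}
          = {p : ℝ × ℝ | p.2 ≤ 0} ∩ ({p : ℝ × ℝ | b ≤ p.1} ∩ {p : ℝ × ℝ | p.1 < d (p.2 - t)}) := by
        ext p; simp [Set.mem_setOf_eq, and_assoc]
      rw [heq]
      exact (measurableSet_le measurable_snd measurable_const).inter
        ((measurableSet_le measurable_const measurable_fst).inter
          (measurableSet_lt measurable_fst (hdm.comp (measurable_snd.sub measurable_const))))
    rw [hset, Measure.volume_eq_prod, Measure.prod_apply_symm hms]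
    have hslice : ∀ s : ℝ, (volume : Measure ℝ)
        ((fun x => (x, s)) ⁻¹' {p : ℝ × ℝ | p.2 ≤ 0 ∧ b ≤ p.1 ∧ p.1 < d (p.2 - t)})
        = Set.indicator (Set.Iic (0:ℝ)) (fun s => ENNReal.ofReal (d (s - t) - b)) s := by
      intro s
      by_cases hs : s ≤ 0
      · have hpre : (fun x : ℝ => (x, s)) ⁻¹' {p : ℝ × ℝ | p.2 ≤ 0 ∧ b ≤ p.1 ∧ p.1 < d (p.2 - t)}
            = Set.Ico b (d (s - t)) := by
          ext x; simp [Set.mem_preimage, Set.mem_setOf_eq, Set.mem_Ico, hs]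
        rw [hpre, Real.volume_Ico, Set.indicator_of_mem (Set.mem_Iic.mpr hs)]
      · have hpre : (fun x : ℝ => (x, s)) ⁻¹' {p : ℝ × ℝ | p.2 ≤ 0 ∧ b ≤ p.1 ∧ p.1 < d (p.2 - t)}
            = ∅ := by
          ext x; simp [Set.mem_preimage, Set.mem_setOf_eq, hs]
        rw [hpre, measure_empty, Set.indicator_of_notMem (by simpa using hs)]
    simp_rw [hslice]
    rw [lintegral_indicator measurableSet_Iic]
    have hstep : ∫⁻ s in Set.Iic (0:ℝ), ENNReal.ofReal (d (s - t) - b)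
        = ∫⁻ s in Set.Iic (0:ℝ),
            ENNReal.ofReal (1 - b) * ∫⁻ l, ENNReal.ofReal (Real.exp (l * (s - t))) ∂π :=
      setLIntegral_congr_fun measurableSet_Iic
        (fun s hs =>
          hofReal (s - t) (by simp only [Set.mem_Iic] at hs; linarith))
    rw [hstep, lintegral_const_mul' _ _ ENNReal.ofReal_ne_top]
    congr 1
    have hmeas : AEMeasurable (Function.uncurry fun (s l : ℝ) =>
        ENNReal.ofReal (Real.exp (l * (s - t))))
        (((volume : Measure ℝ).restrict (Set.Iic 0)).prod π) := by
      exact (ENNReal.continuous_ofReal.comp (Real.continuous_exp.comp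
        (continuous_snd.mul (continuous_fst.sub continuous_const)))).measurable.aemeasurable
    rw [lintegral_lintegral_swap hmeas]
    refine lintegral_congr_ae ?_
    filter_upwards [hpos] with l hl
    exact st13_lint_Iic hl t
  set β := ENNReal.ofReal (1 - b) with hβ
  set c1 := ∫⁻ l, ENNReal.ofReal (1 / l) ∂π with hc1
  set c2 := ∫⁻ l, ENNReal.ofReal (1 / l ^ 2) ∂π with hc2
  have hA0 : volume (A 0) = β * c1 := by
    have h := hvol 0 le_rfl
    rw [Set.inter_self] at h
    rw [h, hc1]
    congr 1
    refine lintegral_congr fun l => ?_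
    norm_num
  have hmain : ∫⁻ t in Set.Ioi (0:ℝ), volume (A t ∩ A 0) = β * c2 := by
    have hstep : ∫⁻ t in Set.Ioi (0:ℝ), volume (A t ∩ A 0)
        = ∫⁻ t in Set.Ioi (0:ℝ),
            β * ∫⁻ l, ENNReal.ofReal (Real.exp (-(l * t)) / l) ∂π :=
      setLIntegral_congr_fun measurableSet_Ioi
        (fun t ht => hvol t (le_of_lt ht))
    rw [hstep, lintegral_const_mul' _ _ ENNReal.ofReal_ne_top]
    congr 1
    have hmeas2 : AEMeasurable (Function.uncurry fun (t l : ℝ) =>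
        ENNReal.ofReal (Real.exp (-(l * t)) / l))
        (((volume : Measure ℝ).restrict (Set.Ioi 0)).prod π) := by
      refine Measurable.aemeasurable ?_
      refine Measurable.ennreal_ofReal ?_
      exact ((Real.continuous_exp.comp (continuous_snd.mul continuous_fst).neg).measurable).div
        measurable_snd
    rw [lintegral_lintegral_swap hmeas2, hc2]
    refine lintegral_congr_ae ?_
    filter_upwards [hpos] with l hl
    have hsplit : ∀ t : ℝ, ENNReal.ofReal (Real.exp (-(l * t)) / l)
        = ENNReal.ofReal (Real.exp (-(l * t))) * ENNReal.ofReal (1 / l) := by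
      intro t
      rw [← ENNReal.ofReal_mul (Real.exp_pos _).le, mul_one_div]
    simp_rw [hsplit]
    rw [lintegral_mul_const' _ _ ENNReal.ofReal_ne_top, st13_lint_Ioi hl,
      ← ENNReal.ofReal_mul (by positivity)]
    congr 1
    rw [div_mul_div_comm, one_mul, sq]
  have hβ0 : β ≠ 0 := (ENNReal.ofReal_pos.mpr h1b).ne'
  have hβt : β ≠ ⊤ := ENNReal.ofReal_ne_top
  have hc1top : c1 ≠ ⊤ := by
    have h := hπint.hasFiniteIntegral
    rw [hc1]
    refine (lt_of_le_of_lt (lintegral_mono fun l => ?_) h).ne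
    rw [one_div]
    exact Real.ofReal_le_enorm _
  have hc10 : c1 ≠ 0 := by
    intro h0
    rw [hc1] at h0
    have hm : Measurable fun l : ℝ => ENNReal.ofReal (1 / l) :=
      (measurable_const.div measurable_id).ennreal_ofReal
    have hz := (lintegral_eq_zero_iff hm).mp h0
    have h2 : ∀ᵐ l ∂π, False := by
      filter_upwards [hpos, hz] with l hl hzz
      simp only [Pi.zero_apply, ENNReal.ofReal_eq_zero] at hzz
      have : 0 < 1 / l := by positivity
      linarith
    rw [ae_iff] at h2
    simp [measure_univ] at h2
  refine ⟨hmain, ?_, ?_⟩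
  · have hinv : (β * c1)⁻¹ ≠ ⊤ := ENNReal.inv_ne_top.mpr (mul_ne_zero hβ0 hc10)
    rw [hA0]
    simp_rw [div_eq_mul_inv]
    rw [lintegral_mul_const' _ _ hinv, hmain,
      ENNReal.mul_inv (Or.inl hβ0) (Or.inl hβt),
      show β * c2 * (β⁻¹ * c1⁻¹) = β * β⁻¹ * (c2 * c1⁻¹) by ring,
      ENNReal.mul_inv_cancel hβ0 hβt, one_mul]
  · have hinv : (β * c1)⁻¹ ≠ ⊤ := ENNReal.inv_ne_top.mpr (mul_ne_zero hβ0 hc10)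
    have hkey : ∫⁻ t in Set.Ioi (0:ℝ), volume (A t ∩ A 0) / volume (A 0) = c2 * c1⁻¹ := by
      rw [hA0]
      simp_rw [div_eq_mul_inv]
      rw [lintegral_mul_const' _ _ hinv, hmain,
        ENNReal.mul_inv (Or.inl hβ0) (Or.inl hβt),
        show β * c2 * (β⁻¹ * c1⁻¹) = β * β⁻¹ * (c2 * c1⁻¹) by ring,
        ENNReal.mul_inv_cancel hβ0 hβt, one_mul]
    rw [hkey]
    constructor
    · intro h
      by_contra hc
      rw [not_lt, top_le_iff] at hc
      rw [hc, ENNReal.top_mul (ENNReal.inv_ne_zero.mpr hc1top)] at h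
      exact absurd h (lt_irrefl _)
    · intro h
      exact ENNReal.mul_lt_top h (ENNReal.inv_lt_top.mpr (pos_iff_ne_zero.mpr hc10))
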